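/- arXiv:1807.02252 — 5 statements merged into one kernel-verified Lean document; each statement's English description precedes it below -/
import Mathlib

section
/- μ_p(F_{r+1}^t \ F_r^t) = C(t+2r, r+1) p^{t+r+1} q^{r+1} and μ_p(F_r^t \ F_{r+1}^t) = C(t+2r, r) p^{t+r} q^{r+2}. -/
open Finset

noncomputable def mu (n : ℕ) (p : ℝ) (𝒜 : Finset (Finset (Fin n))) : ℝ :=
  ∑ A ∈ 𝒜, p ^ A.card * (1 - p) ^ (n - A.card)

def Fam (n t r : ℕ) : Finset (Finset (Fin n)) :=
  Finset.univ.filter (fun F => t + r ≤ (F.filter (fun i => i.val < t + 2 * r)).card)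


lemma card_filter_val_lt (n m : ℕ) (hm : m ≤ n) :
    (univ.filter (fun i : Fin n => i.val < m)).card = m := by
  rw [show univ.filter (fun i : Fin n => i.val < m)
      = (Finset.range m).attachFin (fun x hx => lt_of_lt_of_le (Finset.mem_range.mp hx) hm) by
    ext i; simp]
  simp [Finset.card_attachFin]

lemma fiber_sum (n m : ℕ) (hm : m ≤ n) (p : ℝ) (S : Finset (Fin n))
    (hS : ∀ i ∈ S, i.val < m) :
    ∑ F ∈ univ.filter (fun F : Finset (Fin n) => F.filter (fun i => i.val < m) = S),
      p ^ F.card * (1 - p) ^ (n - F.card)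
    = p ^ S.card * (1 - p) ^ (m - S.card) := by
  have hScard : S.card ≤ m := by
    calc S.card ≤ (univ.filter (fun i : Fin n => i.val < m)).card :=
      card_le_card (fun i hi => by simp [hS i hi])
    _ = m := card_filter_val_lt n m hm
  set V : Finset (Fin n) := univ.filter (fun i : Fin n => ¬ i.val < m) with hV
  have hVcard : m + V.card = n := by
    have h2 := Finset.card_filter_add_card_filter_not
      (s := (univ : Finset (Fin n))) (p := fun i : Fin n => i.val < m)
    rw [card_filter_val_lt n m hm, Finset.card_univ, Fintype.card_fin] at h2
    exact h2
  have step1 : ∑ F ∈ univ.filter (fun F : Finset (Fin n) =>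
        F.filter (fun i => i.val < m) = S), p ^ F.card * (1 - p) ^ (n - F.card)
      = ∑ T ∈ V.powerset, p ^ (S ∪ T).card * (1 - p) ^ (n - (S ∪ T).card) := by
    refine Finset.sum_nbij' (fun F => F.filter (fun i => ¬ i.val < m)) (fun T => S ∪ T)
      ?_ ?_ ?_ ?_ ?_
    · intro F hF
      simp only [mem_powerset]
      intro i hi
      simp only [hV, mem_filter] at hi ⊢
      exact ⟨mem_univ _, hi.2⟩
    · intro T hT
      simp only [mem_powerset] at hT
      simp only [mem_filter]
      refine ⟨mem_univ _, ?_⟩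
      rw [Finset.filter_union]
      have h1 : S.filter (fun i => i.val < m) = S := filter_true_of_mem hS
      have h2 : T.filter (fun i => i.val < m) = ∅ := by
        rw [Finset.filter_eq_empty_iff]
        intro i hi
        have := hT hi
        simp only [hV, mem_filter] at this
        exact this.2
      rw [h1, h2, union_empty]
    · intro F hF
      simp only [mem_filter] at hF
      conv_rhs => rw [← Finset.filter_union_filter_not_eq (fun i => i.val < m) F]
      rw [hF.2]
    · intro T hT
      simp only [mem_powerset] at hT
      show (S ∪ T).filter (fun i => ¬ i.val < m) = T
      rw [Finset.filter_union]
      have h1 : S.filter (fun i => ¬ i.val < m) = ∅ := by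
        rw [Finset.filter_eq_empty_iff]
        intro i hi
        simp [hS i hi]
      have h2 : T.filter (fun i => ¬ i.val < m) = T := by
        apply filter_true_of_mem
        intro i hi
        have := hT hi
        simp only [hV, mem_filter] at this
        exact this.2
      rw [h1, h2, empty_union]
    · intro F hF
      simp only [mem_filter] at hF
      have hdisj : Disjoint S (F.filter (fun i => ¬ i.val < m)) := by
        rw [Finset.disjoint_left]
        intro i hiS hiT
        simp only [mem_filter] at hiT
        exact hiT.2 (hS i hiS)
      rw [card_union_of_disjoint hdisj]
      have hFcard : F.card = S.card + (F.filter (fun i => ¬ i.val < m)).card := by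
        have h3 := Finset.card_filter_add_card_filter_not
          (s := F) (p := fun i : Fin n => i.val < m)
        rw [hF.2] at h3; omega
      rw [← hFcard]
  rw [step1]
  have key : ∀ T ∈ V.powerset,
      p ^ (S ∪ T).card * (1 - p) ^ (n - (S ∪ T).card)
      = (p ^ S.card * (1 - p) ^ (m - S.card)) * (p ^ T.card * (1 - p) ^ (V.card - T.card)) := by
    intro T hT
    simp only [mem_powerset] at hT
    have hdisj : Disjoint S T := by
      rw [Finset.disjoint_left]
      intro i hiS hiT
      have := hT hiT
      simp only [hV, mem_filter] at this
      exact this.2 (hS i hiS)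
    have hTcard : T.card ≤ V.card := card_le_card hT
    rw [card_union_of_disjoint hdisj]
    have h4 : n - (S.card + T.card) = (m - S.card) + (V.card - T.card) := by omega
    rw [h4, pow_add, pow_add]
    ring
  rw [Finset.sum_congr rfl key, ← Finset.mul_sum, Finset.sum_pow_mul_eq_add_pow]
  simp

lemma mu_filter (n m : ℕ) (hm : m ≤ n) (p : ℝ) (𝒮 : Finset (Finset (Fin n)))
    (h𝒮 : ∀ S ∈ 𝒮, ∀ i ∈ S, i.val < m) :
    mu n p (univ.filter (fun F => F.filter (fun i => i.val < m) ∈ 𝒮))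
    = ∑ S ∈ 𝒮, p ^ S.card * (1 - p) ^ (m - S.card) := by
  unfold mu
  rw [← Finset.sum_fiberwise_eq_sum_filter]
  exact Finset.sum_congr rfl fun S hS => fiber_sum n m hm p S (h𝒮 S hS)

lemma filter_filter_lt (n : ℕ) (F : Finset (Fin n)) (k m : ℕ) (h : k ≤ m) :
    (F.filter (fun i => i.val < m)).filter (fun i => i.val < k)
      = F.filter (fun i => i.val < k) := by
  rw [Finset.filter_filter]
  exact Finset.filter_congr (fun i _ => by constructor <;> intro h' <;> omega)

lemma part1_image (n t r : ℕ) (hn : t + 2*r + 2 ≤ n) (htr : 1 ≤ t + r) :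
    ((univ.filter (fun i : Fin n => i.val < t+2*(r+1))).powerset.filter
      (fun S => t + (r+1) ≤ (S.filter (fun i => i.val < t+2*(r+1))).card ∧
        (S.filter (fun i => i.val < t+2*r)).card < t + r))
    = Finset.image (fun A => A ∪ {(⟨t+2*r, by omega⟩ : Fin n), ⟨t+2*r+1, by omega⟩})
        ((univ.filter (fun i : Fin n => i.val < t+2*r)).powersetCard (t+r-1)) := by
  set a : Fin n := ⟨t+2*r, by omega⟩ with ha
  set b : Fin n := ⟨t+2*r+1, by omega⟩ with hb
  have hab : a ≠ b := by simp [ha, hb, Fin.ext_iff]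
  have hDcard : ({a, b} : Finset (Fin n)).card = 2 := by
    rw [card_insert_of_notMem (by simp [hab]), card_singleton]
  ext S
  simp only [mem_filter, mem_powerset, mem_image, mem_powersetCard]
  constructor
  · rintro ⟨hsub, h1, h2⟩
    have hfm : S.filter (fun i => i.val < t+2*(r+1)) = S :=
      filter_true_of_mem (fun i hi => by
        have := hsub hi; simp only [mem_filter] at this; exact this.2)
    rw [hfm] at h1
    set A := S.filter (fun i => i.val < t+2*r) with hA
    set B := S.filter (fun i => ¬ i.val < t+2*r) with hB
    have hABcard : A.card + B.card = S.card :=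
      Finset.card_filter_add_card_filter_not _
    have hBD : B ⊆ {a, b} := by
      intro i hi
      simp only [hB, mem_filter] at hi
      have hiU := hsub hi.1
      simp only [mem_filter] at hiU
      simp only [mem_insert, mem_singleton, ha, hb, Fin.ext_iff]
      omega
    have hBcard : B.card ≤ 2 := le_trans (card_le_card hBD) (le_of_eq hDcard)
    have hAcard : A.card = t + r - 1 := by omega
    have hBeq : B = {a, b} := eq_of_subset_of_card_le hBD (by omega)
    refine ⟨A, ⟨?_, hAcard⟩, ?_⟩
    · intro i hi
      simp only [hA, mem_filter] at hi
      simp only [mem_filter]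
      exact ⟨mem_univ _, hi.2⟩
    · rw [← hBeq, hA, hB]
      exact Finset.filter_union_filter_not_eq _ _
  · rintro ⟨A, ⟨hAsub, hAcard⟩, rfl⟩
    have hAW : ∀ i ∈ A, i.val < t+2*r := fun i hi => by
      have := hAsub hi; simp only [mem_filter] at this; exact this.2
    have hdisj : Disjoint A ({a, b} : Finset (Fin n)) := by
      rw [Finset.disjoint_right]
      intro i hi
      simp only [mem_insert, mem_singleton] at hi
      intro hiA
      have := hAW i hiA
      rcases hi with rfl | rfl <;> simp [ha, hb] at this
    have hScard : (A ∪ {a, b}).card = t + r + 1 := by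
      rw [card_union_of_disjoint hdisj, hAcard, hDcard]; omega
    have hfA : (A ∪ {a, b}).filter (fun i => i.val < t+2*r) = A := by
      rw [Finset.filter_union]
      have e1 : A.filter (fun i => i.val < t+2*r) = A := filter_true_of_mem hAW
      have e2 : ({a, b} : Finset (Fin n)).filter (fun i => i.val < t+2*r) = ∅ := by
        rw [Finset.filter_eq_empty_iff]
        intro i hi
        simp only [mem_insert, mem_singleton] at hi
        rcases hi with rfl | rfl <;> simp [ha, hb]
      rw [e1, e2, union_empty]
    have hfm : (A ∪ {a, b}).filter (fun i => i.val < t+2*(r+1)) = A ∪ {a, b} := by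
      apply filter_true_of_mem
      intro i hi
      rcases mem_union.mp hi with h | h
      · have := hAW i h; omega
      · simp only [mem_insert, mem_singleton] at h
        rcases h with rfl | rfl <;> simp [ha, hb] <;> omega
    refine ⟨?_, ?_, ?_⟩
    · intro i hi
      simp only [mem_filter]
      refine ⟨mem_univ _, ?_⟩
      rcases mem_union.mp hi with h | h
      · have := hAW i h; omega
      · simp only [mem_insert, mem_singleton] at h
        rcases h with rfl | rfl <;> simp [ha, hb] <;> omega
    · rw [hfm, hScard]; omega
    · rw [hfA]; omega

lemma part2_eq (n t r : ℕ) (hn : t + 2*r + 2 ≤ n) :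
    ((univ.filter (fun i : Fin n => i.val < t+2*(r+1))).powerset.filter
      (fun S => t + r ≤ (S.filter (fun i => i.val < t+2*r)).card ∧
        (S.filter (fun i => i.val < t+2*(r+1))).card < t + (r+1)))
    = (univ.filter (fun i : Fin n => i.val < t+2*r)).powersetCard (t+r) := by
  ext S
  simp only [mem_filter, mem_powerset, mem_powersetCard]
  constructor
  · rintro ⟨hsub, h1, h2⟩
    have hfm : S.filter (fun i => i.val < t+2*(r+1)) = S :=
      filter_true_of_mem (fun i hi => by
        have := hsub hi; simp only [mem_filter] at this; exact this.2)
    rw [hfm] at h2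
    have hsubA : S.filter (fun i => i.val < t+2*r) ⊆ S := filter_subset _ _
    have hAcard : (S.filter (fun i => i.val < t+2*r)).card ≤ S.card := card_le_card hsubA
    have hAS : S.filter (fun i => i.val < t+2*r) = S :=
      eq_of_subset_of_card_le hsubA (by omega)
    constructor
    · intro i hi
      rw [← hAS] at hi
      simp only [mem_filter] at hi ⊢
      exact ⟨mem_univ _, hi.2⟩
    · rw [← hAS] at h2 ⊢
      omega
  · rintro ⟨hsub, hcard⟩
    have hW : ∀ i ∈ S, i.val < t+2*r := fun i hi => by
      have := hsub hi; simp only [mem_filter] at this; exact this.2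
    have hA : S.filter (fun i => i.val < t+2*r) = S := filter_true_of_mem hW
    have hfm : S.filter (fun i => i.val < t+2*(r+1)) = S :=
      filter_true_of_mem (fun i hi => by have := hW i hi; omega)
    refine ⟨?_, by rw [hA]; omega, by rw [hfm]; omega⟩
    intro i hi
    simp only [mem_filter]
    exact ⟨mem_univ _, by have := hW i hi; omega⟩

theorem stmt2 (n t r : ℕ) (hn : t + 2 * r + 2 ≤ n) (p : ℝ) (hp0 : 0 < p) (hp1 : p < 1) :
    mu n p (Fam n t (r + 1) \ Fam n t r) =
        ((t + 2 * r).choose (r + 1) : ℝ) * p ^ (t + r + 1) * (1 - p) ^ (r + 1) ∧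
    mu n p (Fam n t r \ Fam n t (r + 1)) =
        ((t + 2 * r).choose r : ℝ) * p ^ (t + r) * (1 - p) ^ (r + 2) := by
  have hmn : t + 2*(r+1) ≤ n := by omega
  have hsubU : ∀ (𝒮 : Finset (Finset (Fin n))),
      𝒮 ⊆ (univ.filter (fun i : Fin n => i.val < t+2*(r+1))).powerset →
      ∀ S ∈ 𝒮, ∀ i ∈ S, i.val < t+2*(r+1) := by
    intro 𝒮 h𝒮 S hS i hi
    have := mem_powerset.mp (h𝒮 hS) hi
    simp only [mem_filter] at this
    exact this.2
  constructor
  · -- Part 1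
    set 𝒮₁ := ((univ.filter (fun i : Fin n => i.val < t+2*(r+1))).powerset.filter
      (fun S => t + (r+1) ≤ (S.filter (fun i => i.val < t+2*(r+1))).card ∧
        (S.filter (fun i => i.val < t+2*r)).card < t + r)) with h𝒮₁
    have hset : Fam n t (r+1) \ Fam n t r
        = univ.filter (fun F => F.filter (fun i => i.val < t+2*(r+1)) ∈ 𝒮₁) := by
      ext F
      simp only [Fam, mem_sdiff, mem_filter, mem_univ, true_and, h𝒮₁, mem_powerset]
      rw [filter_filter_lt n F (t+2*(r+1)) (t+2*(r+1)) le_rfl,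
        filter_filter_lt n F (t+2*r) (t+2*(r+1)) (by omega)]
      constructor
      · rintro ⟨h1, h2⟩
        exact ⟨fun i hi => by simp only [mem_filter] at hi ⊢; exact ⟨mem_univ _, hi.2⟩,
          h1, by omega⟩
      · rintro ⟨_, h1, h2⟩
        exact ⟨h1, by omega⟩
    rw [hset, mu_filter n (t+2*(r+1)) hmn p 𝒮₁ (hsubU 𝒮₁ (by rw [h𝒮₁]; exact filter_subset _ _))]
    rcases Nat.lt_or_ge (t+r) 1 with htr | htr
    · -- t + r = 0, i.e. t = 0, r = 0
      have ht : t = 0 := by omega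
      have hr : r = 0 := by omega
      subst ht; subst hr
      have : 𝒮₁ = ∅ := by
        rw [h𝒮₁, Finset.filter_eq_empty_iff]
        intro S _
        simp
      rw [this]
      simp
    · rw [h𝒮₁, part1_image n t r hn htr]
      set a : Fin n := ⟨t+2*r, by omega⟩ with ha
      set b : Fin n := ⟨t+2*r+1, by omega⟩ with hb
      have hab : a ≠ b := by simp [ha, hb, Fin.ext_iff]
      have hDcard : ({a, b} : Finset (Fin n)).card = 2 := by
        rw [card_insert_of_notMem (by simp [hab]), card_singleton]
      have hinj : ∀ A₁ ∈ (univ.filter (fun i : Fin n => i.val < t+2*r)).powersetCard (t+r-1),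
          ∀ A₂ ∈ (univ.filter (fun i : Fin n => i.val < t+2*r)).powersetCard (t+r-1),
          A₁ ∪ {a, b} = A₂ ∪ {a, b} → A₁ = A₂ := by
        intro A₁ hA₁ A₂ hA₂ heq
        have key : ∀ A ∈ (univ.filter (fun i : Fin n => i.val < t+2*r)).powersetCard (t+r-1),
            (A ∪ {a, b}).filter (fun i => i.val < t+2*r) = A := by
          intro A hA
          rw [mem_powersetCard] at hA
          have hAW : ∀ i ∈ A, i.val < t+2*r := fun i hi => by
            have := hA.1 hi; simp only [mem_filter] at this; exact this.2
          rw [Finset.filter_union, filter_true_of_mem hAW,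
            show ({a, b} : Finset (Fin n)).filter (fun i => i.val < t+2*r) = ∅ by
              rw [Finset.filter_eq_empty_iff]
              intro i hi
              simp only [mem_insert, mem_singleton] at hi
              rcases hi with rfl | rfl <;> simp [ha, hb],
            union_empty]
        rw [← key A₁ hA₁, ← key A₂ hA₂, heq]
      rw [Finset.sum_image hinj]
      have hterm : ∀ A ∈ (univ.filter (fun i : Fin n => i.val < t+2*r)).powersetCard (t+r-1),
          p ^ (A ∪ {a, b}).card * (1-p) ^ (t+2*(r+1) - (A ∪ {a, b}).card)
          = p ^ (t+r+1) * (1-p) ^ (r+1) := by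
        intro A hA
        rw [mem_powersetCard] at hA
        have hAW : ∀ i ∈ A, i.val < t+2*r := fun i hi => by
          have := hA.1 hi; simp only [mem_filter] at this; exact this.2
        have hdisj : Disjoint A ({a, b} : Finset (Fin n)) := by
          rw [Finset.disjoint_right]
          intro i hi
          simp only [mem_insert, mem_singleton] at hi
          intro hiA
          have := hAW i hiA
          rcases hi with rfl | rfl <;> simp [ha, hb] at this
        rw [card_union_of_disjoint hdisj, hDcard, hA.2,
          show t+r-1+2 = t+r+1 by omega, show t+2*(r+1) - (t+r+1) = r+1 by omega]
      rw [Finset.sum_congr rfl hterm, Finset.sum_const, Finset.card_powersetCard,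
        card_filter_val_lt n (t+2*r) (by omega)]
      have hchoose : (t+2*r).choose (t+r-1) = (t+2*r).choose (r+1) := by
        rw [show t+r-1 = t+2*r - (r+1) by omega]
        exact Nat.choose_symm (by omega)
      rw [hchoose, nsmul_eq_mul]
      ring
  · -- Part 2
    set 𝒮₂ := ((univ.filter (fun i : Fin n => i.val < t+2*(r+1))).powerset.filter
      (fun S => t + r ≤ (S.filter (fun i => i.val < t+2*r)).card ∧
        (S.filter (fun i => i.val < t+2*(r+1))).card < t + (r+1))) with h𝒮₂
    have hset : Fam n t r \ Fam n t (r+1)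
        = univ.filter (fun F => F.filter (fun i => i.val < t+2*(r+1)) ∈ 𝒮₂) := by
      ext F
      simp only [Fam, mem_sdiff, mem_filter, mem_univ, true_and, h𝒮₂, mem_powerset]
      rw [filter_filter_lt n F (t+2*(r+1)) (t+2*(r+1)) le_rfl,
        filter_filter_lt n F (t+2*r) (t+2*(r+1)) (by omega)]
      constructor
      · rintro ⟨h1, h2⟩
        exact ⟨fun i hi => by simp only [mem_filter] at hi ⊢; exact ⟨mem_univ _, hi.2⟩,
          h1, by omega⟩
      · rintro ⟨_, h1, h2⟩
        exact ⟨h1, by omega⟩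
    rw [hset, mu_filter n (t+2*(r+1)) hmn p 𝒮₂ (hsubU 𝒮₂ (by rw [h𝒮₂]; exact filter_subset _ _)),
      h𝒮₂, part2_eq n t r hn]
    have hterm : ∀ S ∈ (univ.filter (fun i : Fin n => i.val < t+2*r)).powersetCard (t+r),
        p ^ S.card * (1-p) ^ (t+2*(r+1) - S.card) = p ^ (t+r) * (1-p) ^ (r+2) := by
      intro S hS
      rw [mem_powersetCard] at hS
      rw [hS.2, show t+2*(r+1) - (t+r) = r+2 by omega]
    rw [Finset.sum_congr rfl hterm, Finset.sum_const, Finset.card_powersetCard,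
      card_filter_val_lt n (t+2*r) (by omega)]
    have hchoose : (t+2*r).choose (t+r) = (t+2*r).choose r := by
      rw [show t+r = t+2*r - r by omega]
      exact Nat.choose_symm (by omega)
    rw [hchoose, nsmul_eq_mul]
    ring
end

section
/- μ_p(F_{r+1}^t) - μ_p(F_r^t) is positive, zero, or negative according as p - (r+1)/(t+2r+1) is positive, zero, or negative, respectively. -/
open Finset

set_option maxHeartbeats 1000000

lemma weight_sum_one {α : Type*} [DecidableEq α] (p : ℝ) (s : Finset α) :
    ∑ B ∈ s.powerset, p ^ B.card * (1 - p) ^ (s.card - B.card) = 1 := by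
  have h := Finset.prod_add (fun _ : α => p) (fun _ => (1 : ℝ) - p) s
  have h2 : ∀ B ∈ s.powerset, p ^ B.card * (1 - p) ^ (s.card - B.card)
      = (∏ _i ∈ B, p) * ∏ _i ∈ s \ B, (1 - p) := by
    intro B hB
    rw [Finset.prod_const, Finset.prod_const, Finset.card_sdiff_of_subset (Finset.mem_powerset.1 hB)]
  rw [Finset.sum_congr rfl h2, ← h]
  simp

lemma card_filter_lt (n k : ℕ) (hk : k ≤ n) :
    ((Finset.univ : Finset (Fin n)).filter fun i => i.val < k).card = k := by
  have h : ∀ m ∈ Finset.range k, m < n := fun m hm => lt_of_lt_of_le (Finset.mem_range.1 hm) hk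
  have e : ((Finset.univ : Finset (Fin n)).filter fun i => i.val < k)
      = (Finset.range k).attachFin h := by
    ext i
    simp [Finset.mem_attachFin]
  rw [e, Finset.card_attachFin, Finset.card_range]

lemma mu_filter_inter (n : ℕ) (p : ℝ) (S : Finset (Fin n))
    (P : Finset (Fin n) → Prop) [DecidablePred P] :
    mu n p (Finset.univ.filter (fun F => P (F ∩ S))) =
      ∑ B ∈ S.powerset.filter P, p ^ B.card * (1 - p) ^ (S.card - B.card) := by
  classical
  have key : mu n p (Finset.univ.filter (fun F => P (F ∩ S))) =
      ∑ x ∈ (S.powerset.filter P) ×ˢ Sᶜ.powerset,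
        (p ^ x.1.card * (1 - p) ^ (S.card - x.1.card)) *
        (p ^ x.2.card * (1 - p) ^ (Sᶜ.card - x.2.card)) := by
    unfold mu
    refine Finset.sum_nbij' (fun F => (F ∩ S, F \ S)) (fun x => x.1 ∪ x.2) ?_ ?_ ?_ ?_ ?_
    · intro F hF
      simp only [Finset.mem_filter, Finset.mem_univ, true_and] at hF
      simp only [Finset.mem_product, Finset.mem_filter, Finset.mem_powerset]
      refine ⟨⟨Finset.inter_subset_right, hF⟩, fun x hx => ?_⟩
      simp only [Finset.mem_sdiff] at hx
      simp only [Finset.mem_compl]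
      exact hx.2
    · intro x hx
      simp only [Finset.mem_filter, Finset.mem_univ, true_and]
      simp only [Finset.mem_product, Finset.mem_filter, Finset.mem_powerset] at hx
      have : (x.1 ∪ x.2) ∩ S = x.1 := by
        ext i
        simp only [Finset.mem_inter, Finset.mem_union]
        constructor
        · rintro ⟨h1 | h2, hS⟩
          · exact h1
          · exact absurd hS (Finset.mem_compl.1 (hx.2 h2))
        · intro h; exact ⟨Or.inl h, hx.1.1 h⟩
      rw [this]
      exact hx.1.2
    · intro F _
      ext i
      simp only [Finset.mem_union, Finset.mem_inter, Finset.mem_sdiff]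
      tauto
    · intro x hx
      simp only [Finset.mem_product, Finset.mem_filter, Finset.mem_powerset] at hx
      have h1 : (x.1 ∪ x.2) ∩ S = x.1 := by
        ext i
        simp only [Finset.mem_inter, Finset.mem_union]
        constructor
        · rintro ⟨h1 | h2, hS⟩
          · exact h1
          · exact absurd hS (Finset.mem_compl.1 (hx.2 h2))
        · intro h; exact ⟨Or.inl h, hx.1.1 h⟩
      have h2 : (x.1 ∪ x.2) \ S = x.2 := by
        ext i
        simp only [Finset.mem_sdiff, Finset.mem_union]
        constructor
        · rintro ⟨h1 | h2, hS⟩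
          · exact absurd (hx.1.1 h1) hS
          · exact h2
        · intro h
          exact ⟨Or.inr h, fun hS => (Finset.mem_compl.1 (hx.2 h)) hS⟩
      rw [Prod.ext_iff]
      exact ⟨h1, h2⟩
    · intro F hF
      have hcard : (F ∩ S).card + (F \ S).card = F.card :=
        Finset.card_inter_add_card_sdiff F S
      have hc1 : (F ∩ S).card ≤ S.card := Finset.card_le_card Finset.inter_subset_right
      have hc2 : (F \ S).card ≤ Sᶜ.card :=
        Finset.card_le_card (fun x hx => Finset.mem_compl.2 (Finset.mem_sdiff.1 hx).2)
      have hn : S.card + Sᶜ.card = n := by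
        rw [Finset.card_add_card_compl]; simp
      have e1 : F.card = (F ∩ S).card + (F \ S).card := hcard.symm
      have e2 : n - ((F ∩ S).card + (F \ S).card)
          = (S.card - (F ∩ S).card) + (Sᶜ.card - (F \ S).card) := by
        omega
      simp only []
      rw [e1, e2, pow_add, pow_add]
      ring
  rw [key, Finset.sum_product]
  refine Finset.sum_congr rfl fun B hB => ?_
  simp only []
  rw [← Finset.mul_sum, weight_sum_one, mul_one]

lemma mu_Fam (n t r j : ℕ) (p : ℝ) (hrj : r ≤ j) (hjn : t + 2 * j ≤ n) :
    mu n p (Fam n t r) =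
      ∑ B ∈ (Finset.univ.filter (fun i : Fin n => i.val < t + 2 * j)).powerset.filter
          (fun B => t + r ≤ (B.filter (fun i => i.val < t + 2 * r)).card),
        p ^ B.card * (1 - p) ^ ((t + 2 * j) - B.card) := by
  classical
  set S := (Finset.univ.filter (fun i : Fin n => i.val < t + 2 * j)) with hS
  have hfilter : ∀ F : Finset (Fin n),
      (F ∩ S).filter (fun i => i.val < t + 2 * r) = F.filter (fun i => i.val < t + 2 * r) := by
    intro F
    ext i
    simp only [Finset.mem_filter, Finset.mem_inter, hS, Finset.mem_univ, true_and]
    constructor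
    · tauto
    · intro h
      exact ⟨⟨h.1, by omega⟩, h.2⟩
  have hFam : Fam n t r = Finset.univ.filter
      (fun F => (fun B => t + r ≤ (B.filter (fun i => i.val < t + 2 * r)).card) (F ∩ S)) := by
    unfold Fam
    apply Finset.filter_congr
    intro F _
    simp only [hfilter]
  rw [hFam, mu_filter_inter n p S (fun B => t + r ≤ (B.filter (fun i => i.val < t + 2 * r)).card),
    card_filter_lt n (t + 2 * j) hjn]

lemma diff_eq (n t r : ℕ) (ht : 1 ≤ t) (hn : t + 2 * r + 2 ≤ n) (p : ℝ) :
    mu n p (Fam n t (r + 1)) - mu n p (Fam n t r)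
      = (Nat.choose (t + 2 * r) (t + r - 1) : ℝ) * (p ^ (t + r + 1) * (1 - p) ^ (r + 1))
        - (Nat.choose (t + 2 * r) (t + r) : ℝ) * (p ^ (t + r) * (1 - p) ^ (r + 2)) := by
  classical
  set m := t + 2 * r with hm
  set s := t + r with hs
  set S := (Finset.univ.filter (fun i : Fin n => i.val < t + 2 * (r + 1))) with hSdef
  set Sr := (Finset.univ.filter (fun i : Fin n => i.val < t + 2 * r)) with hSrdef
  set W : Finset (Fin n) → ℝ := fun B => p ^ B.card * (1 - p) ^ ((t + 2 * (r + 1)) - B.card)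
    with hW
  set Q0 : Finset (Fin n) → Prop :=
    fun B => t + r ≤ (B.filter (fun i => i.val < t + 2 * r)).card with hQ0
  rw [mu_Fam n t (r + 1) (r + 1) p le_rfl (by omega), mu_Fam n t r (r + 1) p (by omega) (by omega)]
  -- simplify the r+1 filter
  have hQ1 : S.powerset.filter
        (fun B => t + (r + 1) ≤ (B.filter (fun i => i.val < t + 2 * (r + 1))).card)
      = S.powerset.filter (fun B => s + 1 ≤ B.card) := by
    apply Finset.filter_congr
    intro B hB
    have hBS : B ⊆ S := Finset.mem_powerset.1 hB
    have : B.filter (fun i => i.val < t + 2 * (r + 1)) = B := by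
      apply Finset.filter_true_of_mem
      intro i hi
      have := hBS hi
      rw [hSdef, Finset.mem_filter] at this
      exact this.2
    rw [this]
    constructor <;> (intro h; omega)
  rw [hQ1]
  -- the two pieces
  set E1 := (S.powerset.filter (fun B => s + 1 ≤ B.card)).filter (fun B => ¬ Q0 B) with hE1
  set E0 := (S.powerset.filter Q0).filter (fun B => ¬ (s + 1 ≤ B.card)) with hE0
  have split1 := Finset.sum_filter_add_sum_filter_not
    (S.powerset.filter (fun B => s + 1 ≤ B.card)) Q0 W
  have split0 := Finset.sum_filter_add_sum_filter_not
    (S.powerset.filter Q0) (fun B => s + 1 ≤ B.card) W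
  have comm : (S.powerset.filter (fun B => s + 1 ≤ B.card)).filter Q0
      = (S.powerset.filter Q0).filter (fun B => s + 1 ≤ B.card) := by
    rw [Finset.filter_filter, Finset.filter_filter]
    apply Finset.filter_congr
    intro B _
    tauto
  have hdiff : (∑ B ∈ S.powerset.filter (fun B => s + 1 ≤ B.card), W B)
      - (∑ B ∈ S.powerset.filter Q0, W B)
      = (∑ B ∈ E1, W B) - (∑ B ∈ E0, W B) := by
    rw [← split1, ← split0, comm, hE1, hE0]
    ring
  rw [hdiff]
  -- basic elements
  have hma : m < n := by omega
  have hmb : m + 1 < n := by omega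
  set a : Fin n := ⟨m, hma⟩ with haa
  set b : Fin n := ⟨m + 1, hmb⟩ with hbb
  have hab : a ≠ b := by
    simp [haa, hbb, Fin.ext_iff]
  have haS : a ∈ S := by simp [hSdef, haa]; omega
  have hbS : b ∈ S := by simp [hSdef, hbb]; omega
  have haSr : a ∉ Sr := by simp [hSrdef, haa]; omega
  have hbSr : b ∉ Sr := by simp [hSrdef, hbb]; omega
  have hSrS : Sr ⊆ S := by
    intro i hi
    simp only [hSrdef, Finset.mem_filter, Finset.mem_univ, true_and] at hi
    simp only [hSdef, Finset.mem_filter, Finset.mem_univ, true_and]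
    omega
  have hcardSr : Sr.card = m := card_filter_lt n m (by omega)
  have hcardab : ({a, b} : Finset (Fin n)).card = 2 := by
    rw [Finset.card_insert_of_notMem (by simp [hab]), Finset.card_singleton]
  have hsub2 : ∀ B : Finset (Fin n), B ⊆ S →
      B.filter (fun i => ¬ i.val < t + 2 * r) ⊆ {a, b} := by
    intro B hBS i hi
    rw [Finset.mem_filter] at hi
    have hiS := hBS hi.1
    rw [hSdef, Finset.mem_filter] at hiS
    have : i.val = m ∨ i.val = m + 1 := by omega
    rcases this with h | h
    · exact Finset.mem_insert.2 (Or.inl (by rw [haa, Fin.ext_iff]; exact h))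
    · refine Finset.mem_insert.2 (Or.inr ?_)
      rw [Finset.mem_singleton, hbb, Fin.ext_iff]
      exact h
  -- structure of elements of E1
  have hE1mem : ∀ B ∈ E1, B.card = s + 1 ∧
      (B.filter (fun i => i.val < t + 2 * r)).card = s - 1 ∧
      B.filter (fun i => ¬ i.val < t + 2 * r) = {a, b} := by
    intro B hB
    rw [hE1, Finset.mem_filter, Finset.mem_filter, Finset.mem_powerset] at hB
    obtain ⟨⟨hBS, hcard⟩, hnQ0⟩ := hB
    rw [hQ0] at hnQ0
    push_neg at hnQ0
    have hsplit := Finset.card_filter_add_card_filter_not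
      (s := B) (p := fun i => i.val < t + 2 * r)
    have hle2 : (B.filter (fun i => ¬ i.val < t + 2 * r)).card ≤ 2 := by
      calc (B.filter (fun i => ¬ i.val < t + 2 * r)).card
          ≤ ({a, b} : Finset (Fin n)).card := Finset.card_le_card (hsub2 B hBS)
        _ = 2 := hcardab
    have h1 : B.card = s + 1 := by omega
    have h2 : (B.filter (fun i => i.val < t + 2 * r)).card = s - 1 := by omega
    refine ⟨h1, h2, ?_⟩
    exact Finset.eq_of_subset_of_card_le (hsub2 B hBS) (by omega)
  -- E0 is a powersetCard
  have hE0eq : E0 = Finset.powersetCard s Sr := by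
    ext B
    rw [hE0, Finset.mem_filter, Finset.mem_filter, Finset.mem_powerset,
      Finset.mem_powersetCard, hQ0]
    constructor
    · rintro ⟨⟨hBS, hQ⟩, hnot⟩
      have hfle : (B.filter (fun i => i.val < t + 2 * r)).card ≤ B.card :=
        Finset.card_le_card (Finset.filter_subset _ _)
      have hBcard : B.card = s := by omega
      have heq : B.filter (fun i => i.val < t + 2 * r) = B :=
        Finset.eq_of_subset_of_card_le (Finset.filter_subset _ _) (by omega)
      constructor
      · intro i hi
        rw [← heq, Finset.mem_filter] at hi
        simp only [hSrdef, Finset.mem_filter, Finset.mem_univ, true_and]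
        exact hi.2
      · exact hBcard
    · rintro ⟨hBSr, hBcard⟩
      have heq : B.filter (fun i => i.val < t + 2 * r) = B := by
        apply Finset.filter_true_of_mem
        intro i hi
        have := hBSr hi
        simp only [hSrdef, Finset.mem_filter, Finset.mem_univ, true_and] at this
        exact this
      refine ⟨⟨hBSr.trans hSrS, ?_⟩, ?_⟩
      · show t + r ≤ (B.filter (fun i => i.val < t + 2 * r)).card
        rw [heq]; omega
      · show ¬ (s + 1 ≤ B.card)
        omega
  -- card of E1
  have hE1card : E1.card = Nat.choose m (s - 1) := by
    rw [← hcardSr, ← Finset.card_powersetCard]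
    apply Finset.card_nbij' (fun B => B.filter (fun i => i.val < t + 2 * r))
      (fun B' => insert a (insert b B'))
    · intro B hB
      beta_reduce
      obtain ⟨h1, h2, h3⟩ := hE1mem B hB
      rw [Finset.mem_coe, Finset.mem_powersetCard]
      refine ⟨?_, h2⟩
      intro i hi
      rw [Finset.mem_filter] at hi
      simp only [hSrdef, Finset.mem_filter, Finset.mem_univ, true_and]
      exact hi.2
    · intro B' hB'
      beta_reduce
      rw [Finset.mem_coe, Finset.mem_powersetCard] at hB'
      obtain ⟨hB'Sr, hB'card⟩ := hB'
      have haB' : a ∉ B' := fun h => haSr (hB'Sr h)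
      have hbB' : b ∉ B' := fun h => hbSr (hB'Sr h)
      have hanb : a ∉ insert b B' := by
        rw [Finset.mem_insert]
        rintro (h | h)
        · exact hab h
        · exact haB' h
      have hcard : (insert a (insert b B')).card = s + 1 := by
        rw [Finset.card_insert_of_notMem hanb, Finset.card_insert_of_notMem hbB', hB'card]
        omega
      have hfil : (insert a (insert b B')).filter (fun i => i.val < t + 2 * r) = B' := by
        ext i
        rw [Finset.mem_filter, Finset.mem_insert, Finset.mem_insert]
        constructor
        · rintro ⟨h | h | h, hlt⟩
          · exfalso; rw [h, haa] at hlt; simp at hlt; omega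
          · exfalso; rw [h, hbb] at hlt; simp at hlt; omega
          · exact h
        · intro h
          have := hB'Sr h
          simp only [hSrdef, Finset.mem_filter, Finset.mem_univ, true_and] at this
          exact ⟨Or.inr (Or.inr h), this⟩
      rw [hE1, Finset.mem_coe, Finset.mem_filter, Finset.mem_filter, Finset.mem_powerset]
      refine ⟨⟨?_, by omega⟩, ?_⟩
      · intro i hi
        rw [Finset.mem_insert, Finset.mem_insert] at hi
        rcases hi with h | h | h
        · rw [h]; exact haS
        · rw [h]; exact hbS
        · exact hSrS (hB'Sr h)
      · show ¬ (t + r ≤ ((insert a (insert b B')).filter (fun i => i.val < t + 2 * r)).card)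
        rw [hfil, hB'card]
        omega
    · intro B hB
      beta_reduce
      obtain ⟨h1, h2, h3⟩ := hE1mem B hB
      have hun := Finset.filter_union_filter_not_eq (p := fun i => i.val < t + 2 * r) (s := B)
      have : insert a (insert b (B.filter (fun i => i.val < t + 2 * r)))
          = (B.filter (fun i => i.val < t + 2 * r)) ∪ {a, b} := by
        ext i
        simp only [Finset.mem_insert, Finset.mem_union, Finset.mem_singleton]
        tauto
      rw [this, ← h3, hun]
    · intro B' hB'
      beta_reduce
      rw [Finset.mem_coe, Finset.mem_powersetCard] at hB'
      obtain ⟨hB'Sr, hB'card⟩ := hB'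
      ext i
      rw [Finset.mem_filter, Finset.mem_insert, Finset.mem_insert]
      constructor
      · rintro ⟨h | h | h, hlt⟩
        · exfalso; rw [h, haa] at hlt; simp at hlt; omega
        · exfalso; rw [h, hbb] at hlt; simp at hlt; omega
        · exact h
      · intro h
        have := hB'Sr h
        simp only [hSrdef, Finset.mem_filter, Finset.mem_univ, true_and] at this
        exact ⟨Or.inr (Or.inr h), this⟩
  -- sums
  have hsum1 : ∑ B ∈ E1, W B = (Nat.choose m (s - 1) : ℝ) * (p ^ (s + 1) * (1 - p) ^ (r + 1)) := by
    have : ∀ B ∈ E1, W B = p ^ (s + 1) * (1 - p) ^ (r + 1) := by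
      intro B hB
      obtain ⟨h1, _, _⟩ := hE1mem B hB
      rw [hW]
      simp only []
      rw [h1]
      congr 1
      congr 1
      omega
    rw [Finset.sum_congr rfl this, Finset.sum_const, hE1card, nsmul_eq_mul]
  have hsum0 : ∑ B ∈ E0, W B = (Nat.choose m s : ℝ) * (p ^ s * (1 - p) ^ (r + 2)) := by
    have : ∀ B ∈ E0, W B = p ^ s * (1 - p) ^ (r + 2) := by
      intro B hB
      rw [hE0eq, Finset.mem_powersetCard] at hB
      rw [hW]
      simp only []
      rw [hB.2]
      congr 1
      congr 1
      omega
    rw [Finset.sum_congr rfl this, Finset.sum_const, hE0eq, Finset.card_powersetCard,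
      hcardSr, nsmul_eq_mul]
  rw [hsum1, hsum0]

theorem stmt3 (n t r : ℕ) (ht : 1 ≤ t) (hn : t + 2 * r + 2 ≤ n)
    (p : ℝ) (hp0 : 0 < p) (hp1 : p < 1) :
    (0 < mu n p (Fam n t (r + 1)) - mu n p (Fam n t r) ↔
        0 < p - (r + 1 : ℝ) / (t + 2 * r + 1)) ∧
    (mu n p (Fam n t (r + 1)) - mu n p (Fam n t r) = 0 ↔
        p - (r + 1 : ℝ) / (t + 2 * r + 1) = 0) ∧
    (mu n p (Fam n t (r + 1)) - mu n p (Fam n t r) < 0 ↔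
        p - (r + 1 : ℝ) / (t + 2 * r + 1) < 0) := by
  have hD := diff_eq n t r ht hn p
  set c1 : ℝ := (Nat.choose (t + 2 * r) (t + r - 1) : ℝ) with hc1
  set c0 : ℝ := (Nat.choose (t + 2 * r) (t + r) : ℝ) with hc0
  have hc0pos : 0 < c0 := by
    rw [hc0]
    exact_mod_cast Nat.choose_pos (by omega)
  have hchoose : c0 * ((t : ℝ) + r) = c1 * ((r : ℝ) + 1) := by
    have h := Nat.choose_succ_right_eq (t + 2 * r) (t + r - 1)
    have hs1 : t + r - 1 + 1 = t + r := by omega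
    have hms : t + 2 * r - (t + r - 1) = r + 1 := by omega
    rw [hs1, hms] at h
    rw [hc0, hc1]
    exact_mod_cast h
  have hrpos : (0 : ℝ) < (r : ℝ) + 1 := by positivity
  have hTpos : (0 : ℝ) < (t : ℝ) + 2 * r + 1 := by positivity
  have hq : (0 : ℝ) < 1 - p := by linarith
  set K : ℝ := p ^ (t + r) * (1 - p) ^ (r + 1) * (c0 * ((t : ℝ) + 2 * r + 1) / ((r : ℝ) + 1))
    with hK
  have hKpos : 0 < K := by
    rw [hK]; positivity
  set x : ℝ := p - ((r : ℝ) + 1) / ((t : ℝ) + 2 * r + 1) with hx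
  have key : c1 * p - c0 * (1 - p)
      = c0 * ((t : ℝ) + 2 * r + 1) / ((r : ℝ) + 1) * x := by
    rw [hx]
    field_simp
    ring_nf
    linear_combination (-p) * hchoose
  have hfac : mu n p (Fam n t (r + 1)) - mu n p (Fam n t r) = K * x := by
    rw [hD, hK]
    have e1 : p ^ (t + r + 1) = p ^ (t + r) * p := by ring
    have e2 : (1 - p) ^ (r + 2) = (1 - p) ^ (r + 1) * (1 - p) := by ring
    rw [e1, e2]
    have : c1 * (p ^ (t + r) * p * (1 - p) ^ (r + 1))
        - c0 * (p ^ (t + r) * ((1 - p) ^ (r + 1) * (1 - p)))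
        = p ^ (t + r) * (1 - p) ^ (r + 1) * (c1 * p - c0 * (1 - p)) := by ring
    rw [this, key]
    ring
  rw [hfac]
  refine ⟨⟨fun h => ?_, fun h => mul_pos hKpos h⟩,
    ⟨fun h => ?_, fun h => by rw [h, mul_zero]⟩,
    ⟨fun h => ?_, fun h => mul_neg_of_pos_of_neg hKpos h⟩⟩
  · by_contra h'
    push_neg at h'
    have := mul_nonpos_of_nonneg_of_nonpos hKpos.le h'
    linarith
  · exact (mul_eq_zero.mp h).resolve_left (ne_of_gt hKpos)
  · by_contra h'
    push_neg at h'
    have := mul_nonneg hKpos.le h'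
    linarith
end

section
/- Let F^ℓ ⊆ 2^[n] be the family of subsets whose associated walk hits the line y = x + ℓ, i.e., F^ℓ = {F ⊆ [n] : |F ∩ [ℓ+2j]| ≥ ℓ+j for some j ≥ 0}. Then μ_p(F^ℓ) ≤ (p/(1-p))^ℓ for 0 < p < 1/2. -/
open Finset

/-- The family `F^ℓ` of subsets of `[n]` whose walk hits the line `y = x + ℓ`.
(Any witness `j` necessarily satisfies `j ≤ n`, since `ℓ + j ≤ |F| ≤ n`.) -/
def FamLine (n ℓ : ℕ) : Finset (Finset (Fin n)) :=
  Finset.univ.filter (fun F => ∃ j ≤ n,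
    ℓ + j ≤ (F.filter (fun i => i.val < ℓ + 2 * j)).card)

namespace Stmt7Aux

/-- The walk of `f` hits level `ℓ`. -/
def hits (n ℓ : ℕ) (f : Fin n → Bool) : Prop :=
  ∃ j, ℓ + j ≤ (Finset.univ.filter fun i : Fin n => i.val < ℓ + 2 * j ∧ f i).card

instance (n ℓ : ℕ) (f : Fin n → Bool) : Decidable (hits n ℓ f) := by
  have : hits n ℓ f ↔ ∃ j ≤ n,
      ℓ + j ≤ (Finset.univ.filter fun i : Fin n => i.val < ℓ + 2 * j ∧ f i).card := by
    constructor
    · rintro ⟨j, hj⟩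
      refine ⟨j, ?_, hj⟩
      have := hj.trans (Finset.card_filter_le _ _)
      simp only [Finset.card_univ, Fintype.card_fin] at this
      omega
    · rintro ⟨j, _, hj⟩; exact ⟨j, hj⟩
  exact decidable_of_iff' _ this

/-- Weight of a boolean vector. -/
noncomputable def w (p : ℝ) {n : ℕ} (f : Fin n → Bool) : ℝ :=
  ∏ i, (if f i then p else 1 - p)

/-- Total weight of hitting vectors. -/
noncomputable def T (p : ℝ) (n ℓ : ℕ) : ℝ :=
  ∑ f ∈ Finset.univ.filter (hits n ℓ), w p f

lemma sum_split (n : ℕ) (F : (Fin (n + 1) → Bool) → ℝ) :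
    ∑ f : Fin (n + 1) → Bool, F f
      = ∑ g : Fin n → Bool, (F (Fin.cons true g) + F (Fin.cons false g)) := by
  rw [← (Fin.consEquiv (fun _ : Fin (n + 1) => Bool)).sum_comp F]
  rw [Fintype.sum_prod_type, Fintype.sum_bool, ← Finset.sum_add_distrib]
  rfl

lemma w_cons_true (p : ℝ) {n : ℕ} (g : Fin n → Bool) :
    w p (Fin.cons true g) = p * w p g := by
  unfold w
  rw [Fin.prod_univ_succ]
  simp

lemma w_cons_false (p : ℝ) {n : ℕ} (g : Fin n → Bool) :
    w p (Fin.cons false g) = (1 - p) * w p g := by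
  unfold w
  rw [Fin.prod_univ_succ]
  simp

lemma card_small {n ℓ : ℕ} (g : Fin n → Bool) :
    ((Finset.univ.filter fun i : Fin n => i.val < ℓ ∧ g i).card) ≤ ℓ := by
  have h := Finset.card_le_card_of_injOn (f := Fin.val)
    (s := Finset.univ.filter fun i : Fin n => i.val < ℓ ∧ g i) (t := Finset.range ℓ)
    (fun i hi => by simp at hi ⊢; exact hi.1) (fun a _ b _ h => Fin.val_injective h)
  simpa using h

lemma cardCons {n : ℕ} (b : Bool) (g : Fin n → Bool) (m : ℕ) (hm : 0 < m) :
    (Finset.univ.filter fun i : Fin (n + 1) => i.val < m ∧ (Fin.cons (α := fun _ => Bool) b g) i).card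
      = (if b then 1 else 0)
        + (Finset.univ.filter fun i : Fin n => i.val + 1 < m ∧ g i).card := by
  simp only [Finset.card_filter]
  rw [Fin.sum_univ_succ]
  simp [Fin.cons_succ, Fin.cons_zero, hm, Fin.val_succ]

lemma filter_shift {n : ℕ} (g : Fin n → Bool) (a b : ℕ) (hab : ∀ x, x + 1 < a ↔ x < b) :
    (Finset.univ.filter fun i : Fin n => i.val + 1 < a ∧ g i)
      = (Finset.univ.filter fun i : Fin n => i.val < b ∧ g i) := by
  apply Finset.filter_congr
  intro i _
  rw [hab]

lemma hits_cons_true {n ℓ : ℕ} (g : Fin n → Bool) :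
    hits (n + 1) (ℓ + 1) (Fin.cons true g) ↔ hits n ℓ g := by
  unfold hits
  constructor
  · rintro ⟨j, hj⟩
    rw [cardCons _ _ _ (by omega),
      filter_shift g (ℓ + 1 + 2 * j) (ℓ + 2 * j) (by omega)] at hj
    exact ⟨j, by simp at hj; omega⟩
  · rintro ⟨j, hj⟩
    refine ⟨j, ?_⟩
    rw [cardCons _ _ _ (by omega),
      filter_shift g (ℓ + 1 + 2 * j) (ℓ + 2 * j) (by omega)]
    simp
    omega

lemma hits_cons_false {n ℓ : ℕ} (g : Fin n → Bool) :
    hits (n + 1) (ℓ + 1) (Fin.cons false g) ↔ hits n (ℓ + 2) g := by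
  unfold hits
  constructor
  · rintro ⟨j, hj⟩
    rw [cardCons _ _ _ (by omega)] at hj
    simp only [if_neg Bool.false_ne_true, zero_add] at hj
    match j with
    | 0 =>
      rw [filter_shift g (ℓ + 1 + 2 * 0) ℓ (by omega)] at hj
      have := card_small (ℓ := ℓ) g
      omega
    | j + 1 =>
      rw [filter_shift g (ℓ + 1 + 2 * (j + 1)) (ℓ + 2 + 2 * j) (by omega)] at hj
      exact ⟨j, by omega⟩
  · rintro ⟨j, hj⟩
    refine ⟨j + 1, ?_⟩
    rw [cardCons _ _ _ (by omega),
      filter_shift g (ℓ + 1 + 2 * (j + 1)) (ℓ + 2 + 2 * j) (by omega)]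
    simp
    omega

lemma T_rec (p : ℝ) (n ℓ : ℕ) :
    T p (n + 1) (ℓ + 1) = p * T p n ℓ + (1 - p) * T p n (ℓ + 2) := by
  unfold T
  rw [Finset.sum_filter, Finset.sum_filter, Finset.sum_filter, sum_split,
    Finset.mul_sum, Finset.mul_sum, ← Finset.sum_add_distrib]
  apply Finset.sum_congr rfl
  intro g _
  simp only [hits_cons_true, hits_cons_false, w_cons_true, w_cons_false,
    mul_ite, mul_zero]

lemma w_nonneg {p : ℝ} (hp0 : 0 < p) (hp : p < 1 / 2) {n : ℕ} (f : Fin n → Bool) :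
    0 ≤ w p f := by
  apply Finset.prod_nonneg
  intro i _
  split <;> nlinarith

lemma sum_w (p : ℝ) (n : ℕ) : ∑ f : Fin n → Bool, w p f = 1 := by
  induction n with
  | zero => simp [w]
  | succ n ih =>
    rw [sum_split n (w p)]
    simp only [w_cons_true, w_cons_false]
    rw [Finset.sum_add_distrib, ← Finset.mul_sum, ← Finset.mul_sum, ih]
    ring

lemma T_le_one {p : ℝ} (hp0 : 0 < p) (hp : p < 1 / 2) (n ℓ : ℕ) : T p n ℓ ≤ 1 := by
  rw [← sum_w p n]
  exact Finset.sum_le_sum_of_subset_of_nonneg (Finset.filter_subset _ _)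
    (fun f _ _ => w_nonneg hp0 hp f)

lemma T_le {p : ℝ} (hp0 : 0 < p) (hp : p < 1 / 2) :
    ∀ n ℓ, T p n ℓ ≤ (p / (1 - p)) ^ ℓ := by
  have hq : (0:ℝ) < 1 - p := by linarith
  have hα : (0:ℝ) < p / (1 - p) := div_pos hp0 hq
  intro n
  induction n with
  | zero =>
    intro ℓ
    cases ℓ with
    | zero => simpa using T_le_one hp0 hp 0 0
    | succ ℓ =>
      have he : (Finset.univ.filter (hits 0 (ℓ + 1))) = ∅ := by
        rw [Finset.filter_eq_empty_iff]
        rintro f _ ⟨j, hj⟩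
        have := hj.trans (Finset.card_filter_le _ _)
        simp at this
      unfold T
      rw [he, Finset.sum_empty]
      positivity
  | succ n ih =>
    intro ℓ
    cases ℓ with
    | zero => simpa using T_le_one hp0 hp (n+1) 0
    | succ ℓ =>
      rw [T_rec]
      have h1 := ih ℓ
      have h2 := ih (ℓ + 2)
      have key : p * (p / (1 - p)) ^ ℓ + (1 - p) * (p / (1 - p)) ^ (ℓ + 2)
          = (p / (1 - p)) ^ (ℓ + 1) := by
        have hca : (1 - p) * (p / (1 - p)) = p := mul_div_cancel₀ p hq.ne'
        linear_combination ((p / (1 - p)) ^ ℓ * (p / (1 - p) - 1)) * hca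
      calc p * T p n ℓ + (1 - p) * T p n (ℓ + 2)
          ≤ p * (p / (1 - p)) ^ ℓ + (1 - p) * (p / (1 - p)) ^ (ℓ + 2) := by
            gcongr <;> linarith
        _ = (p / (1 - p)) ^ (ℓ + 1) := key

lemma mem_famLine_iff {n ℓ : ℕ} (A : Finset (Fin n)) :
    A ∈ FamLine n ℓ ↔ hits n ℓ (fun x => decide (x ∈ A)) := by
  have hset : ∀ j : ℕ, (A.filter fun i => i.val < ℓ + 2 * j)
      = (Finset.univ.filter fun i : Fin n =>
          i.val < ℓ + 2 * j ∧ (fun x => decide (x ∈ A)) i) := by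
    intro j
    ext i
    simp
    tauto
  unfold FamLine hits
  simp only [Finset.mem_filter, Finset.mem_univ, true_and]
  constructor
  · rintro ⟨j, _, hj⟩
    exact ⟨j, by rwa [hset] at hj⟩
  · rintro ⟨j, hj⟩
    rw [← hset] at hj
    have := hj.trans (Finset.card_filter_le _ _)
    have hA := Finset.card_le_card (Finset.subset_univ A)
    simp only [Finset.card_univ, Fintype.card_fin] at hA
    exact ⟨j, by omega, hj⟩

lemma mu_eq_T (n ℓ : ℕ) (p : ℝ) : mu n p (FamLine n ℓ) = T p n ℓ := by
  unfold mu T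
  refine Finset.sum_nbij' (fun A => fun x => decide (x ∈ A))
    (fun f => Finset.univ.filter fun x => f x) ?_ ?_ ?_ ?_ ?_
  · intro A hA
    simp only [Finset.mem_filter, Finset.mem_univ, true_and]
    exact (mem_famLine_iff A).1 hA
  · intro f hf
    simp only [Finset.mem_filter, Finset.mem_univ, true_and] at hf
    rw [mem_famLine_iff]
    have hfe : (fun x : Fin n => decide (x ∈ Finset.univ.filter fun y => f y)) = f := by
      funext x
      by_cases h : f x <;> simp [h]
    simpa [hfe] using hf
  · intro A _
    ext x
    simp
  · intro f _
    funext x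
    simp
  · intro A _
    rw [w]
    have : ∀ i : Fin n, (if (decide (i ∈ A) : Bool) then p else 1 - p)
        = if i ∈ A then p else 1 - p := by
      intro i; by_cases h : i ∈ A <;> simp [h]
    rw [Finset.prod_congr rfl (fun i _ => this i), Finset.prod_ite,
      Finset.prod_const, Finset.prod_const]
    congr 1
    · congr 1
      simp [Finset.filter_mem_eq_inter]
    · congr 1
      have : Finset.univ.filter (fun i : Fin n => i ∉ A) = Aᶜ := by
        ext i; simp
      rw [this, Finset.card_compl, Fintype.card_fin]

end Stmt7Aux

theorem stmt7 (n ℓ : ℕ) (hℓ : 1 ≤ ℓ) (hn : ℓ ≤ n) (p : ℝ) (hp0 : 0 < p) (hp : p < 1 / 2) :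
    mu n p (FamLine n ℓ) ≤ (p / (1 - p)) ^ ℓ := by
  rw [Stmt7Aux.mu_eq_T]
  exact Stmt7Aux.T_le hp0 hp n ℓ
end

section
/- Let F ⊆ 2^[n] be a shifted, inclusion maximal family. If F ∈ F and F → F' (F shifts to F'), then F' ∈ F. -/
open Finset

def nthSmallest (A : Finset ℕ) (i : ℕ) : ℕ :=
  (A.sort (· ≤ ·)).getD (i - 1) 0

/-- `X` shifts to `Y` (`X → Y`): `|X| ≤ |Y|` and `(X)_i ≥ (Y)_i` for all `i ≤ |X|`. -/
def ShiftsTo (X Y : Finset ℕ) : Prop :=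
  X.card ≤ Y.card ∧ ∀ i, 1 ≤ i → i ≤ X.card → nthSmallest Y i ≤ nthSmallest X i

/-- A family of subsets of `[n] = {1,…,n}` is shifted. -/
def IsShifted (n : ℕ) (𝓕 : Finset (Finset ℕ)) : Prop :=
  ∀ A ∈ 𝓕, ∀ i j : ℕ, 1 ≤ i → i < j → j ≤ n → j ∈ A → i ∉ A →
    insert i (A.erase j) ∈ 𝓕

/-- A family of subsets of `[n]` is inclusion maximal. -/
def IsInclusionMaximal (n : ℕ) (𝓕 : Finset (Finset ℕ)) : Prop :=
  ∀ A A' : Finset ℕ, A ∈ 𝓕 → A ⊆ A' → A' ⊆ Finset.Icc 1 n → A' ∈ 𝓕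

lemma sort_eq_of_aux (A : Finset ℕ) (l : List ℕ) (hs : l.Pairwise (· ≤ ·)) (hn : l.Nodup)
    (ht : l.toFinset = A) : A.sort (· ≤ ·) = l :=
  List.Perm.eq_of_pairwise' (A.pairwise_sort _) hs
    (List.perm_of_nodup_nodup_toFinset_eq (A.sort_nodup _) hn
      (by rw [Finset.sort_toFinset, ht]))

lemma dominated_mem (n : ℕ) (𝓕 : Finset (Finset ℕ))
    (hsub : ∀ A ∈ 𝓕, A ⊆ Finset.Icc 1 n) (hshift : IsShifted n 𝓕) :
    ∀ s : ℕ, ∀ A B : Finset ℕ, A.sum id ≤ s → A ∈ 𝓕 → B ⊆ Finset.Icc 1 n →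
      B.card = A.card →
      (∀ i, 1 ≤ i → i ≤ A.card → nthSmallest B i ≤ nthSmallest A i) → B ∈ 𝓕 := by
  intro s
  induction s using Nat.strong_induction_on with
  | _ s ih =>
    intro A B hsum hA hB hcard hdom
    classical
    by_cases hAB : B = A
    · rwa [hAB]
    set k := A.card with hk
    set lA := A.sort (· ≤ ·) with hlA
    set lB := B.sort (· ≤ ·) with hlB
    have hlenA : lA.length = k := Finset.length_sort _
    have hlenB : lB.length = k := by rw [hlB, Finset.length_sort, hcard]
    -- strict sortedness
    have hSA : lA.Pairwise (· < ·) := (Finset.sortedLT_sort A).pairwise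
    have hSB : lB.Pairwise (· < ·) := (Finset.sortedLT_sort B).pairwise
    have hSA' := List.pairwise_iff_getElem.1 hSA
    have hSB' := List.pairwise_iff_getElem.1 hSB
    have hSAd : ∀ p q, p < q → q < k → lA.getD p 0 < lA.getD q 0 := by
      intro p q hpq hq
      have := hSA' p q (by omega) (by omega) hpq
      rwa [← List.getD_eq_getElem _ 0 (by omega : p < lA.length),
        ← List.getD_eq_getElem _ 0 (by omega : q < lA.length)] at this
    have hSBd : ∀ p q, p < q → q < k → lB.getD p 0 < lB.getD q 0 := by
      intro p q hpq hq
      have := hSB' p q (by omega) (by omega) hpq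
      rwa [← List.getD_eq_getElem _ 0 (by omega : p < lB.length),
        ← List.getD_eq_getElem _ 0 (by omega : q < lB.length)] at this
    -- membership of getD values
    have hmemA : ∀ j, j < k → lA.getD j 0 ∈ A := by
      intro j hj
      rw [← Finset.mem_sort (· ≤ ·), ← hlA, List.getD_eq_getElem _ 0 (by omega : j < lA.length)]
      exact List.getElem_mem _
    have hmemB : ∀ j, j < k → lB.getD j 0 ∈ B := by
      intro j hj
      rw [← Finset.mem_sort (· ≤ ·), ← hlB, List.getD_eq_getElem _ 0 (by omega : j < lB.length)]
      exact List.getElem_mem _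
    -- domination in getD form
    have hdom' : ∀ i, i < k → lB.getD i 0 ≤ lA.getD i 0 := by
      intro i hi
      have := hdom (i + 1) (by omega) (by omega)
      simpa [nthSmallest] using this
    -- existence of a differing index
    have hex : ∃ i, i < k ∧ lB.getD i 0 ≠ lA.getD i 0 := by
      by_contra h
      push_neg at h
      apply hAB
      have hl : lB = lA := by
        apply List.ext_getElem (by omega)
        intro i h1 h2
        have := h i (by omega)
        rwa [List.getD_eq_getElem _ _ h1, List.getD_eq_getElem _ _ h2] at this
      rw [← Finset.sort_toFinset (r := (· ≤ ·)) B, ← Finset.sort_toFinset (r := (· ≤ ·)) A, ← hlA, ← hlB, hl]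
    obtain ⟨hi0, hne0⟩ := Nat.find_spec hex
    set i0 := Nat.find hex with hi0def
    have hmin : ∀ j, j < i0 → lB.getD j 0 = lA.getD j 0 := by
      intro j hj
      have := Nat.find_min hex hj
      push_neg at this
      exact this (by omega)
    set a := lA.getD i0 0 with hadef
    have haA : a ∈ A := hmemA i0 hi0
    have hb1 : 1 ≤ lB.getD i0 0 := (Finset.mem_Icc.1 (hB (hmemB i0 hi0))).1
    have hblt : lB.getD i0 0 < a := lt_of_le_of_ne (hdom' i0 hi0) hne0
    have ha2 : 2 ≤ a := by omega
    have han : a ≤ n := (Finset.mem_Icc.1 (hsub A hA haA)).2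
    -- a - 1 ∉ A
    have hnotA : a - 1 ∉ A := by
      intro hmem
      rw [← Finset.mem_sort (· ≤ ·), ← hlA, List.mem_iff_getElem] at hmem
      obtain ⟨j, hj, hjv⟩ := hmem
      have hgDj : lA.getD j 0 = a - 1 := by rw [List.getD_eq_getElem _ _ hj, hjv]
      have hjk : j < k := by omega
      rcases lt_trichotomy j i0 with h | h | h
      · have hBj : lB.getD j 0 = a - 1 := by rw [hmin j h, hgDj]
        have := hSBd j i0 h hi0
        omega
      · rw [h] at hgDj; omega
      · have := hSAd i0 j h hjk
        omega
    -- the shifted set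
    set A' := insert (a - 1) (A.erase a) with hA'def
    have hA'mem : A' ∈ 𝓕 := hshift A hA (a - 1) a (by omega) (by omega) han haA hnotA
    have hnotErase : a - 1 ∉ A.erase a := fun h => hnotA (Finset.mem_of_mem_erase h)
    have hcardA' : A'.card = k := by
      rw [hA'def, Finset.card_insert_of_notMem hnotErase, Finset.card_erase_of_mem haA]
      have : 1 ≤ A.card := Finset.card_pos.2 ⟨a, haA⟩
      omega
    -- sum decreases
    have hsumErase : a + (A.erase a).sum id = A.sum id := Finset.add_sum_erase A id haA
    have hsumA' : A'.sum id = (a - 1) + (A.erase a).sum id := by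
      rw [hA'def, Finset.sum_insert hnotErase]; rfl
    -- the new sorted list
    set l' := lA.set i0 (a - 1) with hl'def
    have hlen' : l'.length = k := by rw [hl'def, List.length_set]; omega
    have hl'getD : ∀ j, j < k → l'.getD j 0 = if i0 = j then a - 1 else lA.getD j 0 := by
      intro j hj
      rw [hl'def, List.getD_eq_getElem _ 0 (by rw [List.length_set]; omega),
        List.getElem_set]
      by_cases h : i0 = j
      · rw [if_pos h, if_pos h]
      · rw [if_neg h, if_neg h]
        exact (List.getD_eq_getElem _ 0 (by omega)).symm
    have hgDne : ∀ j, j < k → lA.getD j 0 ≠ a - 1 := by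
      intro j hj h
      exact hnotA (h ▸ hmemA j hj)
    have hl'sortedlt : l'.Pairwise (· < ·) := by
      rw [List.pairwise_iff_getElem]
      intro p q hp hq hpq
      have hp' : p < k := by omega
      have hq' : q < k := by omega
      rw [← List.getD_eq_getElem _ 0 hp, ← List.getD_eq_getElem _ 0 hq,
        hl'getD p hp', hl'getD q hq']
      by_cases h1 : i0 = p
      · rw [if_pos h1, if_neg (by omega)]
        have h3 := hSAd p q hpq hq'
        have ha : a = lA.getD p 0 := by rw [hadef, h1]
        omega
      · rw [if_neg h1]
        by_cases h2 : i0 = q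
        · rw [if_pos h2]
          have h3 := hSAd p q hpq hq'
          have h4 := hgDne p hp'
          have ha : a = lA.getD q 0 := by rw [hadef, h2]
          omega
        · rw [if_neg h2]
          exact hSAd p q hpq hq'
    have hl'nodup : l'.Nodup := hl'sortedlt.imp (fun h => ne_of_lt h)
    have hl'sorted : l'.Pairwise (· ≤ ·) := hl'sortedlt.imp (fun h => le_of_lt h)
    have hl'toFinset : l'.toFinset = A' := by
      ext x
      rw [List.mem_toFinset, hA'def, Finset.mem_insert, Finset.mem_erase]
      constructor
      · intro hx
        rw [List.mem_iff_getElem] at hx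
        obtain ⟨j, hj, hjv⟩ := hx
        have hj' : j < k := by omega
        have hjd : l'.getD j 0 = x := by rw [List.getD_eq_getElem _ _ hj, hjv]
        rw [hl'getD j hj'] at hjd
        by_cases h1 : i0 = j
        · rw [if_pos h1] at hjd; left; omega
        · rw [if_neg h1] at hjd
          right
          refine ⟨?_, hjd ▸ hmemA j hj'⟩
          intro h
          rcases lt_trichotomy j i0 with h2 | h2 | h2
          · have := hSAd j i0 h2 hi0
            rw [hjd, h] at this
            omega
          · exact h1 h2.symm
          · have := hSAd i0 j h2 hj'
            rw [hjd, h] at this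
            omega
      · rintro (hx | ⟨hxa, hxA⟩)
        · rw [List.mem_iff_getElem]
          refine ⟨i0, by omega, ?_⟩
          have h5 := hl'getD i0 hi0
          rw [if_pos rfl, List.getD_eq_getElem _ 0 (by omega : i0 < l'.length)] at h5
          rw [h5, hx]
        · rw [← Finset.mem_sort (· ≤ ·), ← hlA, List.mem_iff_getElem] at hxA
          obtain ⟨j, hj, hjv⟩ := hxA
          have hj' : j < k := by omega
          have hjd : lA.getD j 0 = x := by rw [List.getD_eq_getElem _ _ hj, hjv]
          have h1 : i0 ≠ j := by
            intro h
            exact hxa (by rw [hadef, h, hjd])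
          rw [List.mem_iff_getElem]
          refine ⟨j, by omega, ?_⟩
          have h5 := hl'getD j hj'
          rw [if_neg h1, List.getD_eq_getElem _ 0 (by omega : j < l'.length)] at h5
          rw [h5, hjd]
    have hA'sort : A'.sort (· ≤ ·) = l' := sort_eq_of_aux A' l' hl'sorted hl'nodup hl'toFinset
    -- apply the induction hypothesis
    have hsumA : a ≤ A.sum id := Finset.single_le_sum (fun x _ => Nat.zero_le (id x)) haA
    apply ih (s - 1) (by omega) A' B
    · omega
    · exact hA'mem
    · exact hB
    · rw [hcard, hcardA']
    · intro i h1 h2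
      rw [hcardA'] at h2
      have hi1 : i - 1 < k := by omega
      unfold nthSmallest
      rw [hA'sort, ← hlB, hl'getD (i - 1) hi1]
      by_cases hc : i0 = i - 1
      · rw [if_pos hc]
        have := hblt
        rw [hc] at this
        omega
      · rw [if_neg hc]
        exact hdom' (i - 1) hi1

theorem stmt11 (n : ℕ) (𝓕 : Finset (Finset ℕ))
    (hsub : ∀ A ∈ 𝓕, A ⊆ Finset.Icc 1 n)
    (hshift : IsShifted n 𝓕) (hmax : IsInclusionMaximal n 𝓕)
    (F F' : Finset ℕ) (hF : F ∈ 𝓕) (hF' : F' ⊆ Finset.Icc 1 n)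
    (hFF' : ShiftsTo F F') :
    F' ∈ 𝓕 := by
  classical
  obtain ⟨hcard, hdom⟩ := hFF'
  set k := F.card with hk
  set lF' := F'.sort (· ≤ ·) with hlF'
  have hlen : lF'.length = F'.card := Finset.length_sort _
  set t := lF'.take k with ht
  have htlen : t.length = k := by
    rw [ht, List.length_take]
    omega
  have htsub : t.Sublist lF' := List.take_sublist _ _
  have htnodup : t.Nodup := (F'.sort_nodup _).sublist htsub
  have htsorted : t.Pairwise (· ≤ ·) := (F'.pairwise_sort _).sublist htsub
  set Y := t.toFinset with hY
  have hYcard : Y.card = k := by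
    rw [hY, List.toFinset_card_of_nodup htnodup, htlen]
  have hYsort : Y.sort (· ≤ ·) = t := sort_eq_of_aux Y t htsorted htnodup rfl
  have hYF' : Y ⊆ F' := by
    intro x hx
    rw [hY, List.mem_toFinset] at hx
    rw [← Finset.mem_sort (· ≤ ·), ← hlF']
    exact htsub.subset hx
  have hYmem : Y ∈ 𝓕 := by
    apply dominated_mem n 𝓕 hsub hshift (F.sum id) F Y le_rfl hF
      (hYF'.trans hF') (by rw [hYcard])
    intro i h1 h2
    have h3 : nthSmallest Y i = nthSmallest F' i := by
      unfold nthSmallest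
      rw [hYsort, ← hlF']
      have hi1 : i - 1 < t.length := by omega
      rw [List.getD_eq_getElem _ _ hi1, List.getD_eq_getElem _ _ (by
        rw [hlen]; have := htlen; rw [ht, List.length_take] at this; omega)]
      exact List.getElem_take
    rw [h3]
    exact hdom i h1 h2
  exact hmax Y F' hYmem hYF' hF'
end

section
/- For integers r ≥ 1, t > r² − r − 1, and p with r/(t+2r−1) ≤ p ≤ (r+1)/(t+2r+1), one has p(1−p) < (r+1)(t+1)/((t+2r+1)(t+r+1)). -/
theorem stmt14 (r t : ℕ) (hr : 1 ≤ r) (ht : (t : ℝ) > r ^ 2 - r - 1) (p : ℝ)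
    (hpl : (r : ℝ) / (t + 2 * r - 1) ≤ p) (hpu : p ≤ (r + 1 : ℝ) / (t + 2 * r + 1)) :
    p * (1 - p) < (r + 1 : ℝ) * (t + 1) / ((t + 2 * r + 1) * (t + r + 1)) := by
  have hr1 : (1:ℝ) ≤ (r:ℝ) := by exact_mod_cast hr
  have ht0 : (0:ℝ) ≤ (t:ℝ) := Nat.cast_nonneg t
  rcases Nat.eq_zero_or_pos t with h0 | hpos
  · subst h0
    have hr1' : r = 1 := by
      by_contra h
      have h2 : 2 ≤ r := by omega
      have h2' : (2:ℝ) ≤ (r:ℝ) := by exact_mod_cast h2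
      push_cast at ht
      nlinarith
    subst hr1'
    norm_num at hpl hpu
    linarith
  · have ht1 : (1:ℝ) ≤ (t:ℝ) := by exact_mod_cast hpos
    have hD1 : (0:ℝ) < (t:ℝ) + 2*r + 1 := by linarith
    have hD2 : (0:ℝ) < (t:ℝ) + r + 1 := by linarith
    have hu2 : ((r:ℝ)+1)/((t:ℝ)+2*r+1) ≤ 1/2 := by
      rw [div_le_div_iff₀ hD1 (by norm_num)]
      linarith
    have hp2 : p ≤ 1/2 := le_trans hpu hu2
    have hf : p*(1-p) ≤ (((r:ℝ)+1)/((t:ℝ)+2*r+1)) * (1 - ((r:ℝ)+1)/((t:ℝ)+2*r+1)) := by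
      nlinarith [mul_nonneg (sub_nonneg.2 hpu)
        (by linarith : (0:ℝ) ≤ 1 - ((r:ℝ)+1)/((t:ℝ)+2*r+1) - p)]
    have h1u : 1 - ((r:ℝ)+1)/((t:ℝ)+2*r+1) = ((t:ℝ)+r)/((t:ℝ)+2*r+1) := by
      field_simp; ring
    have key : (((r:ℝ)+1)/((t:ℝ)+2*r+1)) * (1 - ((r:ℝ)+1)/((t:ℝ)+2*r+1))
        < ((r:ℝ) + 1) * ((t:ℝ) + 1) / (((t:ℝ) + 2 * r + 1) * ((t:ℝ) + r + 1)) := by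
      rw [h1u, div_mul_div_comm, div_lt_div_iff₀ (by positivity) (by positivity)]
      nlinarith [mul_pos (mul_pos hD1 (show (0:ℝ) < (r:ℝ)+1 by linarith))
        (show (0:ℝ) < (t:ℝ) - (r:ℝ)^2 + r + 1 by linarith)]
    calc p * (1-p) ≤ _ := hf
      _ < _ := key
end
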